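/- Let S be an invertible matrix such that S or −S is totally sign-alternating (i.e., D S D is totally nonnegative where D = diag((−1)^{i+1})). If A has n positive simple pairwise distinct eigenvalues such that for each j the j-th compound A^(j) has the strong Perron–Frobenius property, then for each j the j-th compound of S⁻¹AS also has the strong Perron–Frobenius property. -/

import Mathlib

open Matrix Polynomial Filter

variable {n : ℕ}

/-- The minor of `A` with row set `r` and column set `c` (taken in increasing order). -/
noncomputable def minor (A : Matrix (Fin n) (Fin n) ℝ) (r c : Finset (Fin n))
    (h : c.card = r.card) : ℝ :=
  (A.submatrix (fun i : Fin r.card => (r.orderIsoOfFin rfl i).1)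
      (fun i : Fin r.card => (c.orderIsoOfFin h i).1)).det

/-- The `j`-th compound matrix of `A`: the matrix of all `j × j` minors of `A`,
indexed by the `j`-element subsets of `Fin n` (ordered increasingly). -/
noncomputable def compound (A : Matrix (Fin n) (Fin n) ℝ) (j : ℕ) :
    Matrix {s : Finset (Fin n) // s.card = j} {s : Finset (Fin n) // s.card = j} ℝ :=
  Matrix.of fun r c =>
    (A.submatrix (fun i : Fin j => (r.1.orderIsoOfFin r.2 i).1)
      (fun i : Fin j => (c.1.orderIsoOfFin c.2 i).1)).det

/-- Characteristic polynomial of a real matrix, viewed over `ℂ`. -/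
noncomputable def charC {m : Type*} [Fintype m] [DecidableEq m] (A : Matrix m m ℝ) :
    Polynomial ℂ :=
  (A.map (Complex.ofReal)).charpoly

/-- `lam` is a positive simple strictly dominant eigenvalue of `A` with a strictly
positive eigenvector (the strong Perron–Frobenius property, with specified value). -/
def StrongPFAt {m : Type*} [Fintype m] [DecidableEq m] (A : Matrix m m ℝ) (lam : ℝ) : Prop :=
  0 < lam ∧ (charC A).IsRoot (lam : ℂ) ∧ (charC A).rootMultiplicity (lam : ℂ) = 1 ∧
    (∀ μ : ℂ, (charC A).IsRoot μ → μ ≠ (lam : ℂ) → ‖μ‖ < lam) ∧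
    ∃ v : m → ℝ, (∀ i, 0 < v i) ∧ A *ᵥ v = lam • v

/-- The strong Perron–Frobenius property. -/
def StrongPF {m : Type*} [Fintype m] [DecidableEq m] (A : Matrix m m ℝ) : Prop :=
  ∃ lam : ℝ, StrongPFAt A lam

/-- `M` is strictly `J`-sign-symmetric (for the given set `J`). -/
def SJSWith (J : Finset (Fin n)) (M : Matrix (Fin n) (Fin n) ℝ) : Prop :=
  ∀ i j : Fin n, ((i ∈ J ↔ j ∈ J) → 0 < M i j) ∧ (¬(i ∈ J ↔ j ∈ J) → M i j < 0)

/-- `M` is strictly J-sign-symmetric for some `J ⊆ {1,…,n}`. -/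
def SJS (M : Matrix (Fin n) (Fin n) ℝ) : Prop :=
  ∃ J : Finset (Fin n), SJSWith J M

/-- Eventually strictly J-sign-symmetric. -/
def ESJS (A : Matrix (Fin n) (Fin n) ℝ) : Prop :=
  ∃ k0 : ℕ, ∀ k ≥ k0, SJS (A ^ k)

/-- Eventually (entrywise) positive. -/
def EvPos {m : Type*} [Fintype m] [DecidableEq m] (A : Matrix m m ℝ) : Prop :=
  ∃ k0 : ℕ, ∀ k ≥ k0, ∀ i j, 0 < (A ^ k) i j

/-- Strictly totally positive: all minors of all orders are positive. -/
def STP (A : Matrix (Fin n) (Fin n) ℝ) : Prop :=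
  ∀ (r c : Finset (Fin n)) (h : c.card = r.card), r.Nonempty → 0 < minor A r c h

/-- Totally nonnegative: all minors of all orders are nonnegative. -/
def TotNonneg (A : Matrix (Fin n) (Fin n) ℝ) : Prop :=
  ∀ (r c : Finset (Fin n)) (h : c.card = r.card), 0 ≤ minor A r c h

/-- Eventually strictly totally positive. -/
def ESTP (A : Matrix (Fin n) (Fin n) ℝ) : Prop :=
  ∃ k0 : ℕ, ∀ k ≥ k0, STP (A ^ k)

/-- The checkerboard transform `S* = ((-1)^(i+j) s_ij)`. -/
def checker (S : Matrix (Fin n) (Fin n) ℝ) : Matrix (Fin n) (Fin n) ℝ :=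
  Matrix.of fun i j => (-1 : ℝ) ^ ((i : ℕ) + (j : ℕ)) * S i j

/-- The exterior product `x₀ ∧ ⋯ ∧ x_{j-1}` of the first `j` of the vectors `x`,
as a vector indexed by `j`-element subsets of `Fin n`. -/
noncomputable def wedge (x : Fin n → Fin n → ℝ) (j : ℕ) (hj : j ≤ n) :
    {s : Finset (Fin n) // s.card = j} → ℝ :=
  fun s => (Matrix.of fun a b : Fin j => x (Fin.castLE hj b) (s.1.orderIsoOfFin s.2 a).1).det

namespace S16
variable {n : ℕ}

noncomputable def fords (s : Finset (Fin n)) {k : ℕ} (h : s.card = k) : Fin k → Fin n :=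
  fun i => (s.orderIsoOfFin h i : Fin n)

lemma fords_mem (s : Finset (Fin n)) {k} (h : s.card = k) (i : Fin k) : fords s h i ∈ s :=
  (s.orderIsoOfFin h i).2

lemma fords_injective (s : Finset (Fin n)) {k} (h : s.card = k) : Function.Injective (fords s h) :=
  fun i j hij => (s.orderIsoOfFin h).injective (Subtype.ext hij)

lemma fords_cast (s : Finset (Fin n)) {k l : ℕ} (h : s.card = k) (h' : s.card = l)
    {i : Fin k} {j : Fin l} (hij : (i : ℕ) = (j : ℕ)) : fords s h i = fords s h' j := by
  simp only [fords, Finset.coe_orderIsoOfFin_apply, Finset.orderEmbOfFin_apply,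
    Fin.getElem_fin, hij]

lemma fords_surjOn (s : Finset (Fin n)) {k} (h : s.card = k) (x : Fin n) (hx : x ∈ s) :
    ∃ i, fords s h i = x := by
  refine ⟨(s.orderIsoOfFin h).symm ⟨x, hx⟩, ?_⟩
  simp [fords]

lemma fords_lt (s : Finset (Fin n)) {k l : ℕ} (h : s.card = k) (h' : s.card = l)
    {i : Fin k} {j : Fin l} (hij : (i : ℕ) < (j : ℕ)) : fords s h i < fords s h' j := by
  have hs : (s.sort (· ≤ ·)).Pairwise (· < ·) := List.sortedLT_iff_pairwise.mp s.sortedLT_sort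
  rw [List.pairwise_iff_getElem] at hs
  simp only [fords, Finset.coe_orderIsoOfFin_apply, Finset.orderEmbOfFin_apply, Fin.getElem_fin]
  exact hs i j (by rw [Finset.length_sort, h]; exact i.2) (by rw [Finset.length_sort, h']; exact j.2) hij

lemma fords_val_inj (s : Finset (Fin n)) {k l : ℕ} (h : s.card = k) (h' : s.card = l)
    {i : Fin k} {j : Fin l} (hij : fords s h i = fords s h' j) : (i : ℕ) = (j : ℕ) := by
  rcases lt_trichotomy (i : ℕ) (j : ℕ) with hlt | heq | hgt
  · exact absurd hij (ne_of_lt (fords_lt s h h' hlt))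
  · exact heq
  · exact absurd hij.symm (ne_of_lt (fords_lt s h' h hgt))

lemma compl_card (r c : Finset (Fin n)) (h : c.card = r.card) : cᶜ.card = rᶜ.card := by
  simp [Finset.card_compl, h]

/-- the permutation taking `c` to `r` and `cᶜ` to `rᶜ` order-preservingly -/
noncomputable def pfun (r c : Finset (Fin n)) (h : c.card = r.card) : Fin n → Fin n :=
  fun x => if hx : x ∈ c
    then fords r rfl ((c.orderIsoOfFin h).symm ⟨x, hx⟩)
    else fords rᶜ (compl_card r c h).symm ((cᶜ.orderIsoOfFin rfl).symm ⟨x, by simpa using hx⟩)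

lemma pfun_fords (r c : Finset (Fin n)) (h : c.card = r.card) {k} (hc : c.card = k)
    (hr : r.card = k) (i : Fin k) : pfun r c h (fords c hc i) = fords r hr i := by
  unfold pfun
  rw [dif_pos (fords_mem c hc i)]
  set j := (c.orderIsoOfFin h).symm ⟨fords c hc i, fords_mem c hc i⟩ with hj
  have hji : (j : ℕ) = (i : ℕ) := by
    have h2 : fords c h j = fords c hc i := by
      have h3 := (c.orderIsoOfFin h).apply_symm_apply ⟨fords c hc i, fords_mem c hc i⟩
      simpa [fords, hj] using congrArg Subtype.val h3
    exact fords_val_inj c h hc h2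
  exact fords_cast r rfl hr hji

lemma pfun_fords_compl (r c : Finset (Fin n)) (h : c.card = r.card) {k} (hc : cᶜ.card = k)
    (hr : rᶜ.card = k) (i : Fin k) : pfun r c h (fords cᶜ hc i) = fords rᶜ hr i := by
  have hmem : fords cᶜ hc i ∈ cᶜ := fords_mem cᶜ hc i
  have hnotc : ¬ (fords cᶜ hc i ∈ c) := by simpa using hmem
  unfold pfun
  rw [dif_neg hnotc]
  set j := (cᶜ.orderIsoOfFin rfl).symm ⟨fords cᶜ hc i, by simpa using hnotc⟩ with hj
  have hji : (j : ℕ) = (i : ℕ) := by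
    have h2 : fords cᶜ rfl j = fords cᶜ hc i := by
      have h3 := (cᶜ.orderIsoOfFin rfl).apply_symm_apply ⟨fords cᶜ hc i, by simpa using hnotc⟩
      simpa [fords, hj] using congrArg Subtype.val h3
    exact fords_val_inj cᶜ rfl hc h2
  exact fords_cast rᶜ (compl_card r c h).symm hr hji

lemma pfun_injective (r c : Finset (Fin n)) (h : c.card = r.card) :
    Function.Injective (pfun r c h) := by
  intro a b hab
  by_cases ha : a ∈ c <;> by_cases hb : b ∈ c
  · obtain ⟨i, rfl⟩ := fords_surjOn c rfl a ha
    obtain ⟨j, rfl⟩ := fords_surjOn c rfl b hb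
    rw [pfun_fords r c h rfl h.symm, pfun_fords r c h rfl h.symm] at hab
    exact congrArg (fords c rfl) (Fin.ext (fords_val_inj r h.symm h.symm hab))
  · obtain ⟨i, rfl⟩ := fords_surjOn c rfl a ha
    obtain ⟨j, rfl⟩ := fords_surjOn cᶜ rfl b (by simpa using hb)
    rw [pfun_fords r c h rfl h.symm, pfun_fords_compl r c h rfl (compl_card r c h).symm] at hab
    have h1 := fords_mem r h.symm i
    have h2 := fords_mem rᶜ (compl_card r c h).symm j
    rw [hab] at h1
    simp only [Finset.mem_compl] at h2
    exact absurd h1 h2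
  · obtain ⟨i, rfl⟩ := fords_surjOn cᶜ rfl a (by simpa using ha)
    obtain ⟨j, rfl⟩ := fords_surjOn c rfl b hb
    rw [pfun_fords_compl r c h rfl (compl_card r c h).symm, pfun_fords r c h rfl h.symm] at hab
    have h1 := fords_mem r h.symm j
    have h2 := fords_mem rᶜ (compl_card r c h).symm i
    rw [← hab] at h1
    simp only [Finset.mem_compl] at h2
    exact absurd h1 h2
  · obtain ⟨i, rfl⟩ := fords_surjOn cᶜ rfl a (by simpa using ha)
    obtain ⟨j, rfl⟩ := fords_surjOn cᶜ rfl b (by simpa using hb)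
    rw [pfun_fords_compl r c h rfl (compl_card r c h).symm,
      pfun_fords_compl r c h rfl (compl_card r c h).symm] at hab
    exact congrArg (fords cᶜ rfl) (Fin.ext
      (fords_val_inj rᶜ (compl_card r c h).symm (compl_card r c h).symm hab))

noncomputable def perm2 (r c : Finset (Fin n)) (h : c.card = r.card) : Equiv.Perm (Fin n) :=
  Equiv.ofBijective (pfun r c h) (Finite.injective_iff_bijective.mp (pfun_injective r c h))

lemma perm2_apply (r c : Finset (Fin n)) (h : c.card = r.card) (x : Fin n) :
    perm2 r c h x = pfun r c h x := rfl

lemma pfun_comp (r b c : Finset (Fin n)) (hbc : c.card = b.card) (hrb : b.card = r.card)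
    (x : Fin n) : pfun r b hrb (pfun b c hbc x) = pfun r c (hbc.trans hrb) x := by
  by_cases hx : x ∈ c
  · obtain ⟨i, rfl⟩ := fords_surjOn c rfl x hx
    rw [pfun_fords b c hbc rfl hbc.symm, pfun_fords r b hrb hbc.symm (hbc.trans hrb).symm,
      pfun_fords r c (hbc.trans hrb) rfl (hbc.trans hrb).symm]
  · obtain ⟨i, rfl⟩ := fords_surjOn cᶜ rfl x (by simpa using hx)
    rw [pfun_fords_compl b c hbc rfl (compl_card b c hbc).symm,
      pfun_fords_compl r b hrb (compl_card b c hbc).symm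
        (compl_card r c (hbc.trans hrb)).symm,
      pfun_fords_compl r c (hbc.trans hrb) rfl (compl_card r c (hbc.trans hrb)).symm]

lemma perm2_mul (r b c : Finset (Fin n)) (hbc : c.card = b.card) (hrb : b.card = r.card) :
    perm2 r b hrb * perm2 b c hbc = perm2 r c (hbc.trans hrb) := by
  apply Equiv.ext
  intro x
  rw [Equiv.Perm.mul_apply, perm2_apply, perm2_apply, perm2_apply]
  exact pfun_comp r b c hbc hrb x

lemma perm2_refl (c : Finset (Fin n)) (h : c.card = c.card) : perm2 c c h = 1 := by
  ext x
  rw [Equiv.Perm.one_apply, perm2_apply]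
  by_cases hx : x ∈ c
  · obtain ⟨i, rfl⟩ := fords_surjOn c rfl x hx
    rw [pfun_fords c c h rfl rfl]
  · obtain ⟨i, rfl⟩ := fords_surjOn cᶜ rfl x (by simpa using hx)
    rw [pfun_fords_compl c c h rfl rfl]

/-- Cauchy–Binet -/
theorem cauchyBinet {k : ℕ} (M : Matrix (Fin k) (Fin n) ℝ) (N : Matrix (Fin n) (Fin k) ℝ) :
    det (M * N) = ∑ s : {s : Finset (Fin n) // s.card = k},
      det (M.submatrix id (fords s.1 s.2)) * det (N.submatrix (fords s.1 s.2) id) := by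
  -- step 1: expand
  have step1 : det (M * N) =
      ∑ p : Fin k → Fin n, det (M.submatrix id p) * ∏ i, N (p i) i := by
    rw [Matrix.det_apply']
    have : ∀ σ : Equiv.Perm (Fin k), (∏ i, (M * N) (σ i) i) =
        ∑ p : Fin k → Fin n, ∏ i, (M (σ i) (p i) * N (p i) i) := by
      intro σ
      simp only [Matrix.mul_apply]
      rw [Finset.prod_univ_sum]
      rw [Fintype.piFinset_univ]
    simp_rw [this, Finset.mul_sum]
    rw [Finset.sum_comm]
    refine Finset.sum_congr rfl fun p _ => ?_
    rw [Matrix.det_apply', Finset.sum_mul]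
    refine Finset.sum_congr rfl fun σ _ => ?_
    rw [Finset.prod_mul_distrib]
    simp [Matrix.submatrix_apply, mul_assoc, mul_comm, mul_left_comm]
  rw [step1]
  -- step 2: non-injective p contribute 0
  rw [← Finset.sum_filter_add_sum_filter_not Finset.univ (fun p => Function.Injective p)]
  have h2 : ∑ p ∈ Finset.univ.filter (fun p : Fin k → Fin n => ¬ Function.Injective p),
      det (M.submatrix id p) * ∏ i, N (p i) i = 0 := by
    refine Finset.sum_eq_zero fun p hp => ?_
    have hp := (Finset.mem_filter.mp hp).2
    simp only [Function.Injective] at hp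
    push_neg at hp
    obtain ⟨i, j, hij, hne⟩ := hp
    have : det (M.submatrix id p) = 0 :=
      Matrix.det_zero_of_column_eq hne (fun l => by simp [Matrix.submatrix_apply, hij])
    simp [this]
  rw [h2, add_zero]
  -- step 3: bijection with pairs (s, σ)
  have step3 : ∀ s : {s : Finset (Fin n) // s.card = k},
      det (M.submatrix id (fords s.1 s.2)) * det (N.submatrix (fords s.1 s.2) id) =
      ∑ σ : Equiv.Perm (Fin k),
        det (M.submatrix id (fords s.1 s.2 ∘ σ)) * ∏ i, N (fords s.1 s.2 (σ i)) i := by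
    intro s
    rw [Matrix.det_apply' (N.submatrix (fords s.1 s.2) id), Finset.mul_sum]
    refine Finset.sum_congr rfl fun σ _ => ?_
    have : M.submatrix id (fords s.1 s.2 ∘ σ) = (M.submatrix id (fords s.1 s.2)).submatrix id σ := by
      ext i j; simp
    rw [this, Matrix.det_permute' σ]
    simp [Matrix.submatrix_apply, mul_assoc, mul_comm, mul_left_comm]
  simp_rw [step3]
  rw [← Finset.sum_product']
  -- bijection from pairs (s, σ) onto injective functions
  refine (Finset.sum_bij (fun (x : {s : Finset (Fin n) // s.card = k} × Equiv.Perm (Fin k))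
      (_ : x ∈ Finset.univ) => fords x.1.1 x.1.2 ∘ x.2) ?_ ?_ ?_ ?_).symm
  · intro x _
    simp only [Finset.mem_filter, Finset.mem_univ, true_and]
    exact (fords_injective x.1.1 x.1.2).comp x.2.injective
  · -- injectivity
    rintro ⟨⟨s, hs⟩, σ⟩ _ ⟨⟨s', hs'⟩, σ'⟩ _ heq
    have heq' : fords s hs ∘ σ = fords s' hs' ∘ σ' := heq
    have himg : s = s' := by
      have h1 : Finset.image (fords s hs ∘ σ) Finset.univ = s := by
        ext x
        simp only [Finset.mem_image, Finset.mem_univ, true_and, Function.comp_apply]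
        constructor
        · rintro ⟨i, rfl⟩; exact fords_mem _ _ _
        · intro hx
          refine ⟨σ.symm ((s.orderIsoOfFin hs).symm ⟨x, hx⟩), ?_⟩
          simp [fords]
      have h2 : Finset.image (fords s' hs' ∘ σ') Finset.univ = s' := by
        ext x
        simp only [Finset.mem_image, Finset.mem_univ, true_and, Function.comp_apply]
        constructor
        · rintro ⟨i, rfl⟩; exact fords_mem _ _ _
        · intro hx
          refine ⟨σ'.symm ((s'.orderIsoOfFin hs').symm ⟨x, hx⟩), ?_⟩
          simp [fords]
      rw [← h1, ← h2, heq']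
    subst himg
    have hσ : σ = σ' := by
      ext i
      have := fords_injective s hs (congrFun heq' i)
      exact congrArg Fin.val this
    simp [hσ]
  · -- surjectivity
    intro p hp
    simp only [Finset.mem_filter, Finset.mem_univ, true_and] at hp
    have hs : (Finset.image p Finset.univ).card = k := by
      rw [Finset.card_image_of_injective _ hp, Finset.card_univ, Fintype.card_fin]
    set s : Finset (Fin n) := Finset.image p Finset.univ with hsdef
    have hmem : ∀ i, p i ∈ s := fun i => Finset.mem_image_of_mem p (Finset.mem_univ i)
    set g : Fin k → Fin k := fun i => (s.orderIsoOfFin hs).symm ⟨p i, hmem i⟩ with hg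
    have hginj : Function.Injective g := by
      intro i j hij
      apply hp
      have h2 := congrArg (s.orderIsoOfFin hs) hij
      simp only [hg, OrderIso.apply_symm_apply] at h2
      exact Subtype.ext_iff.mp h2
    have hgbij : Function.Bijective g := Finite.injective_iff_bijective.mp hginj
    refine ⟨⟨⟨s, hs⟩, Equiv.ofBijective g hgbij⟩, Finset.mem_univ _, ?_⟩
    funext i
    simp only [Function.comp_apply, Equiv.ofBijective_apply, fords, hg]
    simp
  · -- values
    rintro ⟨⟨s, hs⟩, σ⟩ _
    rfl


noncomputable def compound' (A : Matrix (Fin n) (Fin n) ℝ) (j : ℕ) :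
    Matrix {s : Finset (Fin n) // s.card = j} {s : Finset (Fin n) // s.card = j} ℝ :=
  Matrix.of fun r c => (A.submatrix (fords r.1 r.2) (fords c.1 c.2)).det

theorem compound'_mul (A B : Matrix (Fin n) (Fin n) ℝ) (j : ℕ) :
    compound' (A * B) j = compound' A j * compound' B j := by
  ext r c
  rw [Matrix.mul_apply]
  have : (A * B).submatrix (fords r.1 r.2) (fords c.1 c.2) =
      (A.submatrix (fords r.1 r.2) id) * (B.submatrix id (fords c.1 c.2)) := by
    ext i l; simp [Matrix.mul_apply]
  rw [compound', Matrix.of_apply, this, cauchyBinet]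
  refine Finset.sum_congr rfl fun s _ => ?_
  simp [compound', Matrix.submatrix_submatrix, Function.comp]

theorem compound'_one (j : ℕ) :
    compound' (1 : Matrix (Fin n) (Fin n) ℝ) j = 1 := by
  ext r c
  by_cases hrc : r = c
  · subst hrc
    have : (1 : Matrix (Fin n) (Fin n) ℝ).submatrix (fords r.1 r.2) (fords r.1 r.2) = 1 := by
      ext i l
      simp [Matrix.one_apply, (fords_injective r.1 r.2).eq_iff]
    simp [compound', this]
  · have hne : (r.1 \ c.1).Nonempty := by
      rw [Finset.sdiff_nonempty]
      intro hsub
      exact hrc (Subtype.ext (Finset.eq_of_subset_of_card_le hsub (by rw [r.2, c.2])))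
    obtain ⟨x, hx⟩ := hne
    rw [Finset.mem_sdiff] at hx
    obtain ⟨i, hi⟩ : ∃ i, fords r.1 r.2 i = x := by
      refine ⟨(r.1.orderIsoOfFin r.2).symm ⟨x, hx.1⟩, ?_⟩
      simp [fords]
    have hzero : det ((1 : Matrix (Fin n) (Fin n) ℝ).submatrix (fords r.1 r.2) (fords c.1 c.2)) = 0 := by
      apply Matrix.det_eq_zero_of_row_eq_zero i
      intro l
      have : fords r.1 r.2 i ≠ fords c.1 c.2 l := by
        rw [hi]; intro h; exact hx.2 (h ▸ fords_mem c.1 c.2 l)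
      simp [Matrix.one_apply, this]
    simp [compound', hzero, Matrix.one_apply, hrc]

/-- similar matrices have the same charpoly (over any comm ring) -/
theorem charpoly_conj {m R : Type*} [Fintype m] [DecidableEq m] [CommRing R]
    (P Q M : Matrix m m R) (hPQ : P * Q = 1) (hQP : Q * P = 1) :
    (Q * M * P).charpoly = M.charpoly := by
  have hcomm : ∀ B : Matrix m m R[X], B * (Matrix.scalar m (X : R[X])) = (Matrix.scalar m (X : R[X])) * B :=
    fun B => ((Matrix.scalar_commute (X : R[X]) (fun r => Commute.all _ _) B)).symm
  have hc : charmatrix (Q * M * P) = (Q.map C) * charmatrix M * (P.map C) := by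
    rw [charmatrix, charmatrix]
    simp only [RingHom.mapMatrix_apply]
    have h1 : (Q * M * P).map C = Q.map C * M.map C * P.map C := by
      simp [Matrix.map_mul]
    rw [h1, Matrix.mul_sub, Matrix.sub_mul]
    congr 1
    refine (calc Q.map C * Matrix.scalar m (X : R[X]) * P.map C
        = Matrix.scalar m (X : R[X]) * (Q.map C * P.map C) := by rw [hcomm (Q.map C), mul_assoc]
      _ = Matrix.scalar m (X : R[X]) := by
          rw [← Matrix.map_mul, hQP, Matrix.map_one _ (by simp) (by simp), mul_one]).symm
  have hdet : det ((Q.map C) * (P.map C)) = 1 := by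
    rw [← Matrix.map_mul, hQP, Matrix.map_one _ (by simp) (by simp), det_one]
  rw [det_mul] at hdet
  rw [Matrix.charpoly, hc, det_mul, det_mul, Matrix.charpoly, mul_right_comm, hdet, one_mul]


end S16

namespace S16b
open S16
variable {n : ℕ}

lemma swap_card (X : Finset (Fin n)) (x y : Fin n) (hx : x ∈ X) (hy : y ∉ X) :
    X.card = (insert y (X.erase x)).card := by
  rw [Finset.card_insert_of_notMem (fun hc => hy (Finset.mem_of_mem_erase hc)),
    Finset.card_erase_of_mem hx]
  have : 1 ≤ X.card := Finset.card_pos.mpr ⟨x, hx⟩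
  omega

lemma compl_swap (X : Finset (Fin n)) (x y : Fin n) (hx : x ∈ X) (hy : y ∉ X)
    (hxy : x ≠ y) : (insert y (X.erase x))ᶜ = insert x (Xᶜ.erase y) := by
  ext z
  simp only [Finset.mem_compl, Finset.mem_insert, Finset.mem_erase]
  by_cases h1 : z = x <;> by_cases h2 : z = y <;> by_cases h3 : z ∈ X <;>
    simp_all <;> tauto

lemma perm2_swap (X : Finset (Fin n)) (x y : Fin n) (hx : x ∈ X) (hy : y ∉ X)
    (hadj : (y : ℕ) + 1 = (x : ℕ)) :
    perm2 (insert y (X.erase x)) X (swap_card X x y hx hy) = Equiv.swap x y := by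
  set X' := insert y (X.erase x) with hX'
  have hxy : x ≠ y := fun h => by rw [h] at hadj; omega
  have hyx : (y : ℕ) < (x : ℕ) := by omega
  -- the order iso on the sets
  have hcard' : Fintype.card {a // a ∈ X} = Fintype.card {a // a ∈ X'} := by
    simp only [Fintype.card_coe]
    exact swap_card X x y hx hy
  set f : {a // a ∈ X} → {a // a ∈ X'} := fun z =>
    ⟨if (z : Fin n) = x then y else z, by
      by_cases hz : (z : Fin n) = x
      · simp [hz, hX']
      · simp only [hz, if_neg]
        exact Finset.mem_insert_of_mem (Finset.mem_erase.mpr ⟨hz, z.2⟩)⟩ with hf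
  have hmono : StrictMono f := by
    rintro ⟨a, haX⟩ ⟨b, hbX⟩ hab
    rw [Subtype.mk_lt_mk] at hab
    rw [Subtype.mk_lt_mk]
    simp only
    by_cases ha : a = x <;> by_cases hb : b = x
    · exact absurd (ha.trans hb.symm) (ne_of_lt hab)
    · rw [if_pos ha, if_neg hb]
      have : (x : ℕ) < (b : ℕ) := by rw [← ha]; exact hab
      exact Fin.lt_def.mpr (by omega)
    · rw [if_neg ha, if_pos hb]
      have h1 : (a : ℕ) < (x : ℕ) := by rw [← hb]; exact hab
      have h2 : a ≠ y := fun h => hy (h ▸ haX)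
      have h3 : (a : ℕ) ≠ (y : ℕ) := fun h => h2 (Fin.ext h)
      exact Fin.lt_def.mpr (by omega)
    · simpa [ha, hb] using hab
  have hsurj : Function.Surjective f :=
    ((Fintype.bijective_iff_injective_and_card f).mpr ⟨hmono.injective, hcard'⟩).2
  set Fiso : {a // a ∈ X} ≃o {a // a ∈ X'} := StrictMono.orderIsoOfSurjective f hmono hsurj
    with hFiso
  have hFcoe : ∀ z, (Fiso z : Fin n) = if (z : Fin n) = x then y else z := fun z => rfl
  -- complement iso
  have hcc : X'ᶜ = insert x (Xᶜ.erase y) := compl_swap X x y hx hy hxy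
  have hcard'' : Fintype.card {a // a ∈ Xᶜ} = Fintype.card {a // a ∈ X'ᶜ} := by
    simp only [Fintype.card_coe]
    exact compl_card X' X (swap_card X x y hx hy)
  set g : {a // a ∈ Xᶜ} → {a // a ∈ X'ᶜ} := fun z =>
    ⟨if (z : Fin n) = y then x else z, by
      by_cases hz : (z : Fin n) = y
      · rw [hcc]; simp [hz]
      · rw [hcc]
        simp only [hz, if_neg]
        exact Finset.mem_insert_of_mem (Finset.mem_erase.mpr ⟨hz, z.2⟩)⟩ with hg
  have hgmono : StrictMono g := by
    rintro ⟨a, haX⟩ ⟨b, hbX⟩ hab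
    rw [Subtype.mk_lt_mk] at hab
    rw [Subtype.mk_lt_mk]
    simp only
    by_cases ha : a = y <;> by_cases hb : b = y
    · exact absurd (ha.trans hb.symm) (ne_of_lt hab)
    · rw [if_pos ha, if_neg hb]
      have h1 : (y : ℕ) < (b : ℕ) := by rw [← ha]; exact hab
      have h2 : b ≠ x := fun h => (by simpa using hbX : b ∉ X) (h ▸ hx)
      have h3 : (b : ℕ) ≠ (x : ℕ) := fun h => h2 (Fin.ext h)
      exact Fin.lt_def.mpr (by omega)
    · rw [if_neg ha, if_pos hb]
      have h1 : (a : ℕ) < (y : ℕ) := by rw [← hb]; exact hab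
      exact Fin.lt_def.mpr (by omega)
    · simpa [ha, hb] using hab
  have hgsurj : Function.Surjective g :=
    ((Fintype.bijective_iff_injective_and_card g).mpr ⟨hgmono.injective, hcard''⟩).2
  set Giso : {a // a ∈ Xᶜ} ≃o {a // a ∈ X'ᶜ} := StrictMono.orderIsoOfSurjective g hgmono hgsurj
    with hGiso
  have hGcoe : ∀ z, (Giso z : Fin n) = if (z : Fin n) = y then x else z := fun z => rfl
  -- uniqueness of order isos
  have huniq : X'.orderIsoOfFin rfl =
      ((X.orderIsoOfFin (swap_card X x y hx hy)).trans Fiso) :=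
    Subsingleton.elim _ _
  have huniq2 : X'ᶜ.orderIsoOfFin (compl_card X' X (swap_card X x y hx hy)).symm =
      ((Xᶜ.orderIsoOfFin rfl).trans Giso) :=
    Subsingleton.elim _ _
  apply Equiv.ext
  intro z
  rw [perm2_apply, Equiv.swap_apply_def]
  unfold pfun
  by_cases hz : z ∈ X
  · rw [dif_pos hz]
    have hval : fords X' rfl ((X.orderIsoOfFin (swap_card X x y hx hy)).symm ⟨z, hz⟩)
        = (Fiso ⟨z, hz⟩ : Fin n) := by
      rw [fords, huniq]
      simp
    rw [hval, hFcoe]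
    have hzy : z ≠ y := fun h => hy (h ▸ hz)
    by_cases hzx : z = x <;> simp [hzx, hzy]
  · rw [dif_neg hz]
    have hval : fords X'ᶜ (compl_card X' X (swap_card X x y hx hy)).symm
        ((Xᶜ.orderIsoOfFin rfl).symm ⟨z, by simpa using hz⟩)
        = (Giso ⟨z, by simpa using hz⟩ : Fin n) := by
      rw [fords, huniq2]
      simp
    rw [hval, hGcoe]
    have hzx : z ≠ x := fun h => hz (h ▸ hx)
    by_cases hzy : z = y <;> simp [hzx, hzy, hxy, Ne.symm hxy]

/-- downward closed -/
def DC (X : Finset (Fin n)) : Prop := ∀ x ∈ X, ∀ y : Fin n, y < x → y ∈ X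

lemma exists_move (X : Finset (Fin n)) (hX : ¬ DC X) :
    ∃ x ∈ X, ∃ y : Fin n, y ∉ X ∧ (y : ℕ) + 1 = (x : ℕ) := by
  by_contra hcon
  push_neg at hcon
  apply hX
  have key : ∀ (m : ℕ) (x : Fin n), x ∈ X → (x : ℕ) = m → ∀ y : Fin n, y < x → y ∈ X := by
    intro m
    induction m using Nat.strong_induction_on with
    | _ m IH =>
      intro x hx hxm y hyx
      have hylt : (y : ℕ) < (x : ℕ) := hyx
      have hx0 : (x : ℕ) ≠ 0 := by omega
      have hxn : (x : ℕ) - 1 < n := by omega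
      set y' : Fin n := ⟨(x : ℕ) - 1, hxn⟩ with hy'
      have hy'mem : y' ∈ X := by
        by_contra hy'n
        exact absurd (by simp [hy']; omega : (y' : ℕ) + 1 = (x : ℕ)) (hcon x hx y' hy'n)
      rcases eq_or_lt_of_le (show (y:ℕ) ≤ (y':ℕ) by simp [hy']; omega) with heq | hlt
      · rwa [show y = y' from Fin.ext heq]
      · exact IH (y' : ℕ) (by simp [hy']; omega) y' hy'mem rfl y hlt
  exact fun x hx y hyx => key (x : ℕ) x hx rfl y hyx

lemma DC_mem_iff (X : Finset (Fin n)) (hX : DC X) (z : Fin n) :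
    z ∈ X ↔ (z : ℕ) < X.card := by
  constructor
  · intro hz
    have hsub : Finset.Iic z ⊆ X := fun w hw => by
      rcases eq_or_lt_of_le (Finset.mem_Iic.mp hw) with heq | hlt
      · rwa [heq]
      · exact hX z hz w hlt
    have := Finset.card_le_card hsub
    rw [Fin.card_Iic] at this
    omega
  · intro hz
    by_contra hzn
    have hsub : X ⊆ Finset.Iio z := fun w hw => by
      rw [Finset.mem_Iio]
      rcases lt_trichotomy w z with h | h | h
      · exact h
      · exact absurd (h ▸ hw) hzn
      · exact absurd (hX w hw z h) hzn
    have := Finset.card_le_card hsub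
    rw [Fin.card_Iio] at this
    omega

lemma DC_eq (X Y : Finset (Fin n)) (hX : DC X) (hY : DC Y) (hcard : X.card = Y.card) :
    X = Y := by
  ext z
  rw [DC_mem_iff X hX, DC_mem_iff Y hY, hcard]

lemma sum_move (X : Finset (Fin n)) (x y : Fin n) (hx : x ∈ X) (hy : y ∉ X)
    (hadj : (y : ℕ) + 1 = (x : ℕ)) :
    (∑ z ∈ insert y (X.erase x), (z : ℕ)) + 1 = ∑ z ∈ X, (z : ℕ) := by
  rw [Finset.sum_insert (fun hc => hy (Finset.mem_of_mem_erase hc))]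
  have h2 : (∑ z ∈ X.erase x, (z : ℕ)) + (x : ℕ) = ∑ z ∈ X, (z : ℕ) :=
    Finset.sum_erase_add X _ hx
  omega

theorem sign_perm2_aux : ∀ (N : ℕ) (r c : Finset (Fin n)) (h : c.card = r.card),
    (∑ z ∈ r, (z : ℕ)) + (∑ z ∈ c, (z : ℕ)) ≤ N →
    Equiv.Perm.sign (perm2 r c h) = (-1) ^ ((∑ z ∈ r, (z : ℕ)) + (∑ z ∈ c, (z : ℕ))) := by
  intro N
  induction N with
  | zero =>
    intro r c h hle
    have hr : ∀ X : Finset (Fin n), (∑ z ∈ X, (z : ℕ)) = 0 → DC X := by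
      intro X hX
      by_contra hdc
      obtain ⟨x, hx, y, hy, hadj⟩ := exists_move X hdc
      have hxle : (x : ℕ) ≤ ∑ z ∈ X, (z : ℕ) :=
        Finset.single_le_sum (f := fun z : Fin n => (z : ℕ)) (fun _ _ => Nat.zero_le _) hx
      omega
    have h1 : DC r := hr r (by omega)
    have h2 : DC c := hr c (by omega)
    have : r = c := DC_eq r c h1 h2 h.symm
    subst this
    rw [perm2_refl, _root_.map_one]
    have : (∑ z ∈ r, (z : ℕ)) = 0 := by omega
    simp [this]
  | succ N IH =>
    intro r c h hle
    by_cases hdc : DC c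
    · by_cases hdr : DC r
      · have : r = c := DC_eq r c hdr hdc h.symm
        subst this
        rw [perm2_refl, _root_.map_one]
        exact (Even.neg_one_pow ⟨_, rfl⟩).symm
      · -- move r
        obtain ⟨x, hx, y, hy, hadj⟩ := exists_move r hdr
        set r' := insert y (r.erase x) with hr'
        have hcard : r.card = r'.card := swap_card r x y hx hy
        have hsum : (∑ z ∈ r', (z : ℕ)) + 1 = ∑ z ∈ r, (z : ℕ) := sum_move r x y hx hy hadj
        have hswap : perm2 r' r hcard = Equiv.swap x y := perm2_swap r x y hx hy hadj
        have hcomp : perm2 r r' hcard.symm * perm2 r' r hcard = perm2 r r rfl :=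
          perm2_mul r r' r hcard hcard.symm
        rw [perm2_refl] at hcomp
        have hinv : perm2 r r' hcard.symm = (perm2 r' r hcard)⁻¹ :=
          eq_inv_of_mul_eq_one_left hcomp
        have hcomp2 : perm2 r r' hcard.symm * perm2 r' c (h.trans hcard) = perm2 r c h :=
          perm2_mul r r' c (h.trans hcard) hcard.symm
        rw [← hcomp2, _root_.map_mul, hinv, _root_.map_inv, hswap, Equiv.Perm.sign_swap
          (fun hc => by rw [hc] at hadj; omega)]
        rw [IH r' c (h.trans hcard) (by omega)]
        have hexp : (∑ z ∈ r, (z : ℕ)) + (∑ z ∈ c, (z : ℕ)) =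
            ((∑ z ∈ r', (z : ℕ)) + (∑ z ∈ c, (z : ℕ))) + 1 := by omega
        rw [hexp, pow_succ]
        have hminus : ((-1 : ℤˣ))⁻¹ = -1 := by decide
        rw [hminus, mul_comm]
    · -- move c
      obtain ⟨x, hx, y, hy, hadj⟩ := exists_move c hdc
      set c' := insert y (c.erase x) with hc'
      have hcard : c.card = c'.card := swap_card c x y hx hy
      have hsum : (∑ z ∈ c', (z : ℕ)) + 1 = ∑ z ∈ c, (z : ℕ) := sum_move c x y hx hy hadj
      have hswap : perm2 c' c hcard = Equiv.swap x y := perm2_swap c x y hx hy hadj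
      have hcomp2 : perm2 r c' (hcard.symm.trans h) * perm2 c' c hcard = perm2 r c h :=
        perm2_mul r c' c hcard (hcard.symm.trans h)
      rw [← hcomp2, _root_.map_mul, hswap, Equiv.Perm.sign_swap
        (fun hc => by rw [hc] at hadj; omega)]
      rw [IH r c' (hcard.symm.trans h) (by omega)]
      have hexp : (∑ z ∈ r, (z : ℕ)) + (∑ z ∈ c, (z : ℕ)) =
          ((∑ z ∈ r, (z : ℕ)) + (∑ z ∈ c', (z : ℕ))) + 1 := by omega
      rw [hexp, pow_succ]

theorem sign_perm2 (r c : Finset (Fin n)) (h : c.card = r.card) :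
    Equiv.Perm.sign (perm2 r c h) = (-1) ^ ((∑ z ∈ r, (z : ℕ)) + (∑ z ∈ c, (z : ℕ))) :=
  sign_perm2_aux _ r c h le_rfl

end S16b

namespace S16c
open S16 S16b
variable {n : ℕ}

lemma det_sub_cast (B : Matrix (Fin n) (Fin n) ℝ) (r c : Finset (Fin n)) {k l : ℕ}
    (hrk : r.card = k) (hck : c.card = k) (hrl : r.card = l) (hcl : c.card = l) :
    det (B.submatrix (fords r hrk) (fords c hck)) =
    det (B.submatrix (fords r hrl) (fords c hcl)) := by
  have hre : (B.submatrix (fords r hrl) (fords c hcl)).submatrix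
      (finCongr (hrk.symm.trans hrl)) (finCongr (hrk.symm.trans hrl)) =
      B.submatrix (fords r hrk) (fords c hck) := by
    ext i j
    simp only [Matrix.submatrix_apply, finCongr_apply]
    rw [fords_cast r hrl hrk (i := Fin.cast (hrk.symm.trans hrl) i) (j := i) (by simp),
      fords_cast c hcl hck (i := Fin.cast (hrk.symm.trans hrl) j) (j := j) (by simp)]
  rw [← hre, Matrix.det_submatrix_equiv_self (finCongr (hrk.symm.trans hrl))]

lemma det_unitCols (B : Matrix (Fin n) (Fin n) ℝ) (c : Finset (Fin n))
    (hB : ∀ p ∉ c, ∀ i, B i p = if i = p then 1 else 0) :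
    det B = det (B.submatrix (fords c rfl) (fords c rfl)) := by
  have hinj : Function.Injective (Sum.elim (fords c rfl) (fords cᶜ (rfl : cᶜ.card = _))) := by
    rintro (i | i) (j | j) hij <;> simp only [Sum.elim_inl, Sum.elim_inr] at hij
    · rw [fords_injective c rfl hij]
    · exact absurd (hij ▸ fords_mem c rfl i) (by simpa using fords_mem cᶜ rfl j)
    · exact absurd (hij ▸ fords_mem cᶜ rfl i) (by simpa [hij] using fords_mem c rfl j)
    · rw [fords_injective cᶜ rfl hij]
  have hcards : Fintype.card (Fin c.card ⊕ Fin cᶜ.card) = Fintype.card (Fin n) := by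
    have hcn : c.card ≤ n := by simpa using Finset.card_le_univ c
    simp [Finset.card_compl]
    omega
  set e : (Fin c.card ⊕ Fin cᶜ.card) ≃ Fin n :=
    Equiv.ofBijective _ ((Fintype.bijective_iff_injective_and_card _).mpr ⟨hinj, hcards⟩) with he
  rw [← Matrix.det_submatrix_equiv_self e B]
  have hblocks : B.submatrix e e = Matrix.fromBlocks
      (B.submatrix (fords c rfl) (fords c rfl)) 0
      (B.submatrix (fords cᶜ rfl) (fords c rfl)) 1 := by
    ext (i | i) (j | j)
    · rfl
    · show B (fords c rfl i) (fords cᶜ rfl j) = 0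
      rw [hB _ (by simpa using fords_mem cᶜ rfl j)]
      have : fords c rfl i ≠ fords cᶜ rfl j := by
        intro hc
        exact absurd (hc ▸ fords_mem c rfl i) (by simpa using fords_mem cᶜ rfl j)
      simp [this]
    · rfl
    · show B (fords cᶜ rfl i) (fords cᶜ rfl j) = (1 : Matrix (Fin cᶜ.card) (Fin cᶜ.card) ℝ) i j
      rw [hB _ (by simpa using fords_mem cᶜ rfl j)]
      by_cases hij : i = j
      · simp [hij, Matrix.one_apply]
      · have : fords cᶜ rfl i ≠ fords cᶜ rfl j := fun hc => hij (fords_injective cᶜ rfl hc)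
        simp [this, Matrix.one_apply, hij]
  rw [hblocks, Matrix.det_fromBlocks_zero₁₂]
  simp

/-- Laplace-type expansion along unit columns -/
lemma det_unit_cols_perm (B : Matrix (Fin n) (Fin n) ℝ) (r c : Finset (Fin n))
    (h : c.card = r.card)
    (hB : ∀ p ∉ c, ∀ i, B i p = if i = pfun r c h p then 1 else 0) :
    det B = ((Equiv.Perm.sign (perm2 r c h) : ℤ) : ℝ) *
      det (B.submatrix (fords r h.symm) (fords c rfl)) := by
  set σ := perm2 r c h with hσ
  set B' := B.submatrix (⇑σ) id with hB'
  have hperm : det B' = Equiv.Perm.sign σ * det B := by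
    rw [hB']
    exact Matrix.det_permute σ B
  have hB'cols : ∀ p ∉ c, ∀ i, B' i p = if i = p then 1 else 0 := by
    intro p hp i
    rw [hB', Matrix.submatrix_apply, id, hB p hp (σ i)]
    have : σ i = pfun r c h p ↔ i = p := by
      rw [show pfun r c h p = σ p from rfl]
      exact σ.injective.eq_iff
    simp only [this]
  have h1 : det B' = det (B'.submatrix (fords c rfl) (fords c rfl)) :=
    det_unitCols B' c hB'cols
  have h2 : B'.submatrix (fords c rfl) (fords c rfl) =
      B.submatrix (fords r h.symm) (fords c rfl) := by
    ext i j
    simp only [hB', Matrix.submatrix_apply, id]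
    congr 1
    exact pfun_fords r c h rfl h.symm i
  have hsign : ((Equiv.Perm.sign σ : ℤ) : ℝ) * ((Equiv.Perm.sign σ : ℤ) : ℝ) = 1 := by
    rcases Int.units_eq_one_or (Equiv.Perm.sign σ) with hs | hs <;> rw [hs] <;> norm_num
  have := hperm
  rw [h1, h2] at this
  have h3 : ((Equiv.Perm.sign σ : ℤ) : ℝ) * det (B.submatrix (fords r h.symm) (fords c rfl))
      = ((Equiv.Perm.sign σ : ℤ) : ℝ) * (((Equiv.Perm.sign σ : ℤ) : ℝ) * det B) := by
    rw [← this]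
  rw [h3, ← mul_assoc, hsign, one_mul]

lemma prod_fords (s : Finset (Fin n)) (f : Fin n → ℝ) :
    ∏ i : Fin s.card, f (fords s rfl i) = ∏ z ∈ s, f z := by
  refine Finset.prod_bij (fun i _ => fords s rfl i) ?_ ?_ ?_ ?_
  · exact fun i _ => fords_mem s rfl i
  · exact fun i _ j _ hij => fords_injective s rfl hij
  · intro z hz
    obtain ⟨i, hi⟩ := fords_surjOn s rfl z hz
    exact ⟨i, Finset.mem_univ i, hi⟩
  · exact fun i _ => rfl

lemma sum_fords_parity (s : Finset (Fin n)) :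
    ∏ i : Fin s.card, ((-1 : ℝ) ^ ((fords s rfl i : Fin n) : ℕ)) =
    (-1 : ℝ) ^ (∑ z ∈ s, (z : ℕ)) := by
  rw [prod_fords s (fun z => (-1 : ℝ) ^ (z : ℕ))]
  rw [Finset.prod_pow_eq_pow_sum]

end S16c

namespace S16d
open S16 S16b S16c
variable {n : ℕ}

def checker' (S : Matrix (Fin n) (Fin n) ℝ) : Matrix (Fin n) (Fin n) ℝ :=
  Matrix.of fun i j => (-1 : ℝ) ^ ((i : ℕ) + (j : ℕ)) * S i j

lemma prod_fords' (s : Finset (Fin n)) {k} (h : s.card = k) (f : Fin n → ℝ) :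
    ∏ i : Fin k, f (fords s h i) = ∏ z ∈ s, f z := by
  refine Finset.prod_bij (fun i _ => fords s h i) ?_ ?_ ?_ ?_
  · exact fun i _ => fords_mem s h i
  · exact fun i _ j _ hij => fords_injective s h hij
  · intro z hz
    obtain ⟨i, hi⟩ := fords_surjOn s h z hz
    exact ⟨i, Finset.mem_univ i, hi⟩
  · exact fun i _ => rfl

lemma checker_sub (S : Matrix (Fin n) (Fin n) ℝ) (R C : Finset (Fin n)) {k : ℕ}
    (hR : R.card = k) (hC : C.card = k) :
    det ((checker' S).submatrix (fords R hR) (fords C hC)) =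
    (-1 : ℝ) ^ ((∑ z ∈ R, (z : ℕ)) + (∑ z ∈ C, (z : ℕ))) *
      det (S.submatrix (fords R hR) (fords C hC)) := by
  have hrw : (checker' S).submatrix (fords R hR) (fords C hC) =
      Matrix.of fun i j => ((-1 : ℝ) ^ ((fords R hR i : ℕ))) *
        (Matrix.of fun i j => ((-1 : ℝ) ^ ((fords C hC j : ℕ))) *
          (S.submatrix (fords R hR) (fords C hC)) i j) i j := by
    ext i j
    simp only [Matrix.submatrix_apply, checker', Matrix.of_apply, pow_add]
    ring
  rw [hrw, Matrix.det_mul_column, Matrix.det_mul_row]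
  rw [prod_fords' R hR (fun z => (-1 : ℝ) ^ (z : ℕ)), prod_fords' C hC (fun z => (-1 : ℝ) ^ (z : ℕ))]
  rw [Finset.prod_pow_eq_pow_sum, Finset.prod_pow_eq_pow_sum, ← mul_assoc, ← pow_add]

lemma pfun_cc (c : Finset (Fin n)) (p : Fin n) : pfun cᶜ cᶜ rfl p = p := by
  have h := congrFun (congrArg (fun (e : Equiv.Perm (Fin n)) => (e : Fin n → Fin n))
    (perm2_refl cᶜ rfl)) p
  simpa [perm2_apply] using h

theorem jacobi (S : Matrix (Fin n) (Fin n) ℝ) (hS : IsUnit S.det) (r c : Finset (Fin n))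
    (h : c.card = r.card) :
    S.det * det ((S⁻¹).submatrix (fords r h.symm) (fords c rfl)) =
    (-1 : ℝ) ^ ((∑ z ∈ r, (z : ℕ)) + (∑ z ∈ c, (z : ℕ))) *
      det (S.submatrix (fords cᶜ rfl) (fords rᶜ (compl_card r c h).symm)) := by
  set M : Matrix (Fin n) (Fin n) ℝ := Matrix.of fun i p =>
    if p ∈ c then S⁻¹ i p else (if i = pfun r c h p then 1 else 0) with hM
  have hMunit : ∀ p ∉ c, ∀ i, M i p = if i = pfun r c h p then 1 else 0 := by
    intro p hp i
    simp [hM, hp]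
  have hdetM := det_unit_cols_perm M r c h hMunit
  have hMsub : M.submatrix (fords r h.symm) (fords c rfl) =
      (S⁻¹).submatrix (fords r h.symm) (fords c rfl) := by
    ext i j
    simp [hM, fords_mem c rfl j]
  rw [hMsub] at hdetM
  have hSMunit : ∀ p ∉ cᶜ, ∀ i, (S * M) i p = if i = pfun cᶜ cᶜ rfl p then 1 else 0 := by
    intro p hp i
    have hpc : p ∈ c := by simpa using hp
    have : (S * M) i p = (S * S⁻¹) i p := by
      simp only [Matrix.mul_apply]
      refine Finset.sum_congr rfl fun l _ => ?_
      simp [hM, hpc]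
    rw [this, Matrix.mul_nonsing_inv S hS, pfun_cc]
    simp [Matrix.one_apply]
  have hdetSM := det_unit_cols_perm (S * M) cᶜ cᶜ rfl hSMunit
  rw [perm2_refl] at hdetSM
  simp only [_root_.map_one, Units.val_one, Int.cast_one, one_mul] at hdetSM
  have hSMsub : (S * M).submatrix (fords cᶜ rfl) (fords cᶜ rfl) =
      S.submatrix (fords cᶜ rfl) (fords rᶜ (compl_card r c h).symm) := by
    ext i j
    have hnotc : fords cᶜ rfl j ∉ c := by simpa using fords_mem cᶜ rfl j
    simp only [Matrix.submatrix_apply, Matrix.mul_apply]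
    have : ∀ l, S (fords cᶜ rfl i) l * M l (fords cᶜ rfl j) =
        if l = pfun r c h (fords cᶜ rfl j) then S (fords cᶜ rfl i) l else 0 := by
      intro l
      rw [hM]
      simp only [Matrix.of_apply, hnotc, if_false]
      by_cases hl : l = pfun r c h (fords cᶜ rfl j) <;> simp [hl]
    simp_rw [this]
    rw [Finset.sum_ite_eq' Finset.univ (pfun r c h (fords cᶜ rfl j))]
    simp only [Finset.mem_univ, if_true]
    rw [pfun_fords_compl r c h rfl (compl_card r c h).symm j]
  rw [hSMsub] at hdetSM
  have hmul : S.det * M.det = det (S * M) := (Matrix.det_mul S M).symm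
  rw [hdetSM, hdetM] at hmul
  have hsig : ((Equiv.Perm.sign (perm2 r c h) : ℤ) : ℝ) =
      (-1 : ℝ) ^ ((∑ z ∈ r, (z : ℕ)) + (∑ z ∈ c, (z : ℕ))) := by
    rw [sign_perm2]
    push_cast
    rfl
  rw [hsig] at hmul
  set E := (∑ z ∈ r, (z : ℕ)) + (∑ z ∈ c, (z : ℕ))
  have hsq : (-1 : ℝ) ^ E * (-1 : ℝ) ^ E = 1 := by
    rw [← pow_add]
    exact Even.neg_one_pow ⟨E, rfl⟩
  calc S.det * det ((S⁻¹).submatrix (fords r h.symm) (fords c rfl))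
      = (-1 : ℝ) ^ E * ((-1 : ℝ) ^ E * (S.det * det ((S⁻¹).submatrix (fords r h.symm) (fords c rfl)))) := by
        rw [← mul_assoc, hsq, one_mul]
    _ = (-1 : ℝ) ^ E * (S.det * ((-1 : ℝ) ^ E * det ((S⁻¹).submatrix (fords r h.symm) (fords c rfl)))) := by
        ring
    _ = (-1 : ℝ) ^ E * det (S.submatrix (fords cᶜ rfl) (fords rᶜ (compl_card r c h).symm)) := by
        rw [← hmul]

lemma det_eq_minor_univ (S : Matrix (Fin n) (Fin n) ℝ) :
    det (S.submatrix (fords (Finset.univ : Finset (Fin n)) rfl)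
      (fords (Finset.univ : Finset (Fin n)) rfl)) = det S := by
  have hinj := fords_injective (Finset.univ : Finset (Fin n)) rfl
  have hcards : Fintype.card (Fin (Finset.univ : Finset (Fin n)).card) = Fintype.card (Fin n) := by
    simp
  exact Matrix.det_submatrix_equiv_self
    (Equiv.ofBijective _ ((Fintype.bijective_iff_injective_and_card _).mpr ⟨hinj, hcards⟩)) S

lemma det_pos_of_TN (S : Matrix (Fin n) (Fin n) ℝ) (hS : IsUnit S.det)
    (hTN : ∀ (R C : Finset (Fin n)) (h : C.card = R.card),
      0 ≤ det ((checker' S).submatrix (fords R rfl) (fords C h))) :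
    0 < S.det := by
  have h1 := hTN Finset.univ Finset.univ rfl
  rw [checker_sub S Finset.univ Finset.univ rfl rfl] at h1
  rw [det_eq_minor_univ S] at h1
  have heven : (-1 : ℝ) ^ ((∑ z ∈ (Finset.univ : Finset (Fin n)), (z : ℕ)) +
      (∑ z ∈ (Finset.univ : Finset (Fin n)), (z : ℕ))) = 1 :=
    Even.neg_one_pow ⟨_, rfl⟩
  rw [heven, one_mul] at h1
  exact lt_of_le_of_ne h1 (Ne.symm (IsUnit.ne_zero hS))

lemma inv_sub_nonneg (S : Matrix (Fin n) (Fin n) ℝ) (hS : IsUnit S.det)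
    (hTN : ∀ (R C : Finset (Fin n)) (h : C.card = R.card),
      0 ≤ det ((checker' S).submatrix (fords R rfl) (fords C h)))
    (r c : Finset (Fin n)) (h : c.card = r.card) :
    0 ≤ det ((S⁻¹).submatrix (fords r rfl) (fords c h)) := by
  have hdpos := det_pos_of_TN S hS hTN
  have hJ := jacobi S hS r c h
  have hcc : rᶜ.card = cᶜ.card := (compl_card r c h).symm
  have hTN2 := hTN cᶜ rᶜ hcc
  rw [checker_sub S cᶜ rᶜ rfl hcc] at hTN2
  set E1 := (∑ z ∈ r, (z : ℕ)) + (∑ z ∈ c, (z : ℕ)) with hE1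
  set E2 := (∑ z ∈ cᶜ, (z : ℕ)) + (∑ z ∈ rᶜ, (z : ℕ)) with hE2
  have h2 : (-1 : ℝ) ^ E2 * (-1 : ℝ) ^ E2 = 1 := by
    rw [← pow_add]; exact Even.neg_one_pow ⟨E2, rfl⟩
  have hE : (-1 : ℝ) ^ E1 * (-1 : ℝ) ^ E2 = 1 := by
    rw [← pow_add]
    refine Even.neg_one_pow ?_
    have ha : (∑ z ∈ r, (z : ℕ)) + (∑ z ∈ rᶜ, (z : ℕ)) = ∑ z : Fin n, (z : ℕ) :=
      Finset.sum_add_sum_compl r _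
    have hb : (∑ z ∈ c, (z : ℕ)) + (∑ z ∈ cᶜ, (z : ℕ)) = ∑ z : Fin n, (z : ℕ) :=
      Finset.sum_add_sum_compl c _
    exact ⟨∑ z : Fin n, (z : ℕ), by omega⟩
  have hsame : (-1 : ℝ) ^ E1 = (-1 : ℝ) ^ E2 := by
    calc (-1 : ℝ) ^ E1 = (-1 : ℝ) ^ E1 * ((-1 : ℝ) ^ E2 * (-1 : ℝ) ^ E2) := by rw [h2, mul_one]
      _ = ((-1 : ℝ) ^ E1 * (-1 : ℝ) ^ E2) * (-1 : ℝ) ^ E2 := by ring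
      _ = (-1 : ℝ) ^ E2 := by rw [hE, one_mul]
  have hkey : 0 ≤ S.det * det ((S⁻¹).submatrix (fords r h.symm) (fords c rfl)) := by
    rw [hJ, hsame]
    exact hTN2
  have hX : 0 ≤ det ((S⁻¹).submatrix (fords r h.symm) (fords c rfl)) :=
    (mul_nonneg_iff_of_pos_left hdpos).mp hkey
  rwa [det_sub_cast (S⁻¹) r c h.symm rfl rfl h] at hX

end S16d

section Main
open S16 S16b S16c S16d

lemma mapC_mul {m : Type*} [Fintype m] [DecidableEq m] (M N : Matrix m m ℝ) :
    (M * N).map Complex.ofReal = M.map Complex.ofReal * N.map Complex.ofReal :=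
  Matrix.map_mul (f := Complex.ofRealHom)

lemma mapC_one {m : Type*} [Fintype m] [DecidableEq m] :
    (1 : Matrix m m ℝ).map Complex.ofReal = 1 :=
  Matrix.map_one _ (by simp) (by simp)

set_option maxHeartbeats 2000000 in
theorem stmt16_core (T A : Matrix (Fin n) (Fin n) ℝ) (hT : IsUnit T.det)
    (hTN : TotNonneg (checker T))
    (hPF : ∀ j : ℕ, 1 ≤ j → j ≤ n → StrongPF (compound A j)) :
    ∀ j : ℕ, 1 ≤ j → j ≤ n → StrongPF (compound (T⁻¹ * A * T) j) := by
  intro j hj1 hjn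
  obtain ⟨lam', hpos', hroot, hmult, hdom, v, hv, heig⟩ := hPF j hj1 hjn
  have hceq : ∀ B : Matrix (Fin n) (Fin n) ℝ, compound B j = compound' B j := fun _ => rfl
  set W := compound' T j with hWdef
  set W' := compound' T⁻¹ j with hW'def
  have hWW' : W * W' = 1 := by
    rw [hWdef, hW'def, ← compound'_mul, Matrix.mul_nonsing_inv T hT, compound'_one]
  have hW'W : W' * W = 1 := by
    rw [hWdef, hW'def, ← compound'_mul, Matrix.nonsing_inv_mul T hT, compound'_one]
  have hconj : compound (T⁻¹ * A * T) j = W' * compound A j * W := by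
    rw [hceq, compound'_mul, compound'_mul, ← hceq A]
  have hchar2 : charC (compound (T⁻¹ * A * T) j) = charC (compound A j) := by
    rw [hconj]
    unfold charC
    have hmap : (W' * compound A j * W).map (Complex.ofReal) =
        (W'.map Complex.ofReal) * ((compound A j).map Complex.ofReal) *
          (W.map Complex.ofReal) := by
      rw [mapC_mul, mapC_mul]
    rw [hmap]
    exact charpoly_conj (W.map Complex.ofReal) (W'.map Complex.ofReal) _
      (by rw [← mapC_mul, hWW', mapC_one])
      (by rw [← mapC_mul, hW'W, mapC_one])
  -- nonnegativity of W'
  have hTN' : ∀ (R C : Finset (Fin n)) (h : C.card = R.card),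
      0 ≤ det ((checker' T).submatrix (fords R rfl) (fords C h)) := by
    intro R C h
    exact hTN R C h
  have hW'nonneg : ∀ a b, 0 ≤ W' a b := by
    intro a b
    show 0 ≤ det ((T⁻¹).submatrix (fords a.1 a.2) (fords b.1 b.2))
    rw [det_sub_cast (T⁻¹) a.1 b.1 a.2 b.2 rfl (b.2.trans a.2.symm)]
    exact inv_sub_nonneg T hT hTN' a.1 b.1 (b.2.trans a.2.symm)
  have hrow : ∀ a, ∃ b, W' a b ≠ 0 := by
    intro a
    by_contra hcon
    push_neg at hcon
    have h0 : (W' * W) a a = 0 := by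
      rw [Matrix.mul_apply]
      exact Finset.sum_eq_zero fun b _ => by rw [hcon b, zero_mul]
    rw [hW'W] at h0
    simp [Matrix.one_apply] at h0
  refine ⟨lam', hpos', by rwa [hchar2], by rwa [hchar2],
    fun μ hμ hne => hdom μ (by rwa [hchar2] at hμ) hne, W' *ᵥ v, ?_, ?_⟩
  · intro a
    rw [Matrix.mulVec, dotProduct]
    obtain ⟨b0, hb0⟩ := hrow a
    refine Finset.sum_pos' (fun b _ => mul_nonneg (hW'nonneg a b) (hv b).le)
      ⟨b0, Finset.mem_univ b0, ?_⟩
    exact mul_pos (lt_of_le_of_ne (hW'nonneg a b0) (Ne.symm hb0)) (hv b0)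
  · rw [hconj, Matrix.mulVec_mulVec, Matrix.mul_assoc (W' * compound A j) W W', hWW',
      Matrix.mul_one, ← Matrix.mulVec_mulVec, heig, Matrix.mulVec_smul]

/-- similarity by a totally sign-alternating matrix (or the negative
of one) preserves the Gantmacher–Krein property (strong Perron–Frobenius property of
all compounds). -/
theorem stmt16 (S A : Matrix (Fin n) (Fin n) ℝ) (hS : IsUnit S.det)
    (hTSA : TotNonneg (checker S) ∨ TotNonneg (checker (-S)))
    (lam : Fin n → ℝ) (hanti : StrictAnti lam) (hpos : ∀ i, 0 < lam i)
    (hchar : charC A = ∏ i : Fin n, (X - C (lam i : ℂ)))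
    (hPF : ∀ j : ℕ, 1 ≤ j → j ≤ n → StrongPF (compound A j)) :
    ∀ j : ℕ, 1 ≤ j → j ≤ n → StrongPF (compound (S⁻¹ * A * S) j) := by
  rcases hTSA with hTN | hTN
  · exact stmt16_core S A hS hTN hPF
  · have hdet : IsUnit (-S).det := by
      rw [Matrix.det_neg, Fintype.card_fin]
      exact ((isUnit_one.neg).pow n).mul hS
    have hinv : (-S)⁻¹ = -(S⁻¹) :=
      Matrix.inv_eq_left_inv
        (by rw [Matrix.neg_mul, Matrix.mul_neg, neg_neg, Matrix.nonsing_inv_mul S hS])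
    have hSS : (-S)⁻¹ * A * (-S) = S⁻¹ * A * S := by
      rw [hinv, Matrix.neg_mul, Matrix.mul_neg, Matrix.neg_mul, neg_neg]
    have := stmt16_core (-S) A hdet hTN hPF
    rwa [hSS] at this

end Main
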